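/- Let n ≥ 3. Then for every two non-opposite roots α and β of the A_n root system, {α,β} < 𝒞_2, i.e., there is a Weyl chamber in 𝒞_2 containing both α and β. -/

import Mathlib

/-- The Weyl chamber `C_γ = {(γ(i),γ(j)) : i < j}` of the `A_n` root system, for a
permutation `γ` of `{1,…,n+1}` (realized as `Fin (n+1)`). -/
def Cham (n : ℕ) (γ : Equiv.Perm (Fin (n + 1))) : Set (Fin (n + 1) × Fin (n + 1)) :=
  { x | ∃ i j : Fin (n + 1), i < j ∧ x = (γ i, γ j) }

/-- The boundary `∂C_γ = {(γ(i),γ(i+1)) : 1 ≤ i ≤ n}` of the Weyl chamber `C_γ`. -/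
def bCham (n : ℕ) (γ : Equiv.Perm (Fin (n + 1))) : Set (Fin (n + 1) × Fin (n + 1)) :=
  { x | ∃ i : Fin n, x = (γ i.castSucc, γ i.succ) }

/-- `{α, β} < 𝒞`: some chamber in the collection `𝒞` contains both roots `α` and `β`. -/
def pairLt {n : ℕ} (𝒞 : Set (Set (Fin (n + 1) × Fin (n + 1))))
    (α β : Fin (n + 1) × Fin (n + 1)) : Prop :=
  ∃ C ∈ 𝒞, α ∈ C ∧ β ∈ C

/-- The collections `𝒞_k` of Weyl chambers: `𝒞_0 = {C_{γ₀^l} : 0 ≤ l ≤ n}` with `γ₀` the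
cyclic permutation `(1 2 … n+1)`, and `C_γ ∈ 𝒞_k` (for `k > 0`) iff (i) every pair of roots
of `∂C_γ` is `< 𝒞_{k-1}` and (ii) whenever `(i,j), (i,j'), (i',j) ∈ C_γ`, both
`{(i,j),(i,j')} < 𝒞_{k-1}` and `{(i,j),(i',j)} < 𝒞_{k-1}`. -/
def Ck (n : ℕ) : ℕ → Set (Set (Fin (n + 1) × Fin (n + 1)))
  | 0 => { C | ∃ l : ℕ, l ≤ n ∧ C = Cham n (finRotate (n + 1) ^ l) }
  | (k + 1) => { C | ∃ γ : Equiv.Perm (Fin (n + 1)), C = Cham n γ ∧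
      (∀ α ∈ bCham n γ, ∀ β ∈ bCham n γ, pairLt (Ck n k) α β) ∧
      (∀ i j i' j' : Fin (n + 1),
        (i, j) ∈ Cham n γ → (i, j') ∈ Cham n γ → (i', j) ∈ Cham n γ →
        pairLt (Ck n k) (i, j) (i, j') ∧ pairLt (Ck n k) (i, j) (i', j)) }

open Fin.CommRing Fin.NatCast

namespace St13
variable {n : ℕ}

lemma mem_cham_iff {γ : Equiv.Perm (Fin (n+1))} {a b : Fin (n+1)} :
    (a, b) ∈ Cham n γ ↔ γ.symm a < γ.symm b := by
  constructor
  · rintro ⟨i, j, hij, h⟩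
    rw [Prod.ext_iff] at h
    obtain ⟨h1, h2⟩ := h
    subst h1; subst h2
    simpa using hij
  · intro h
    exact ⟨γ.symm a, γ.symm b, h, by simp⟩

lemma ne_of_mem_cham {γ : Equiv.Perm (Fin (n+1))} {a b : Fin (n+1)}
    (h : (a, b) ∈ Cham n γ) : a ≠ b := by
  rw [mem_cham_iff] at h
  intro he; subst he; exact lt_irrefl _ h

lemma bcham_subset {γ : Equiv.Perm (Fin (n+1))} : bCham n γ ⊆ Cham n γ := by
  rintro x ⟨i, rfl⟩
  exact ⟨i.castSucc, i.succ, Fin.castSucc_lt_succ (i := i), rfl⟩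

lemma rotate_pow_apply (k : ℕ) (i : Fin (n+1)) :
    (finRotate (n+1) ^ k) i = i + (k : Fin (n+1)) := by
  induction k generalizing i with
  | zero => simp
  | succ k ih =>
      rw [pow_succ, Equiv.Perm.mul_apply, finRotate_succ_apply, ih]
      push_cast
      ring

lemma rotate_symm_apply (k : ℕ) (a : Fin (n+1)) :
    (finRotate (n+1) ^ k).symm a = a - (k : Fin (n+1)) := by
  rw [Equiv.symm_apply_eq, rotate_pow_apply]; ring

def cyc (l : Fin (n+1)) : Equiv.Perm (Fin (n+1)) := finRotate (n+1) ^ l.val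

lemma mem_cyc_iff {l a b : Fin (n+1)} :
    (a, b) ∈ Cham n (cyc l) ↔ (a - l).val < (b - l).val := by
  rw [mem_cham_iff]
  unfold cyc
  rw [rotate_symm_apply, rotate_symm_apply, Fin.cast_val_eq_self]
  exact Fin.lt_def

-- val lemmas
lemma val_pos {y : Fin (n+1)} (h : y ≠ 0) : 0 < y.val := Fin.pos_of_ne_zero h

lemma val_add_one {x : Fin (n+1)} (h : x.val < n) : (x + 1).val = x.val + 1 :=
  Fin.val_add_one_of_lt (by rw [Fin.lt_def, Fin.val_last]; exact h)

lemma vneg1 : (-1 : Fin (n+1)).val = n := by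
  by_cases h : (-1 : Fin (n+1)).val < n
  · have := val_add_one h
    norm_num at this
  · have := (-1 : Fin (n+1)).isLt
    omega

lemma val_sub_one {y : Fin (n+1)} (h : y ≠ 0) : (y - 1).val = y.val - 1 := by
  by_cases hx : (y - 1).val < n
  · have h2 := val_add_one hx
    rw [show y - 1 + 1 = y by ring] at h2
    omega
  · exfalso
    have h3 : (y - 1).val = n := by have := (y-1).isLt; omega
    have : y - 1 = -1 := Fin.ext (by rw [vneg1, h3])
    apply h
    have := congrArg (· + 1) this
    simpa using this

lemma val_lt_n {y : Fin (n+1)} (h : y ≠ -1) : y.val < n := by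
  have := y.isLt
  rcases Nat.lt_or_ge y.val n with h1 | h1
  · exact h1
  · exact absurd (Fin.ext (by rw [vneg1]; omega) : y = -1) h


/-- The permutation of positions: fixes `[0,s)`, shifts `[s,n)` up by one, sends `n` to `s`. -/
def sig (n : ℕ) (s : Fin (n+1)) : Equiv.Perm (Fin (n+1)) where
  toFun t := if t.val = n then s else if s.val ≤ t.val then t + 1 else t
  invFun u := if u = s then Fin.last n else if s.val < u.val then u - 1 else u
  left_inv := by
    intro t
    dsimp only
    by_cases h1 : t.val = n
    · rw [if_pos h1, if_pos rfl]
      exact Fin.ext (by rw [Fin.val_last, h1])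
    · have htn : t.val < n := by have := t.isLt; omega
      by_cases h2 : s.val ≤ t.val
      · rw [if_neg h1, if_pos h2]
        have hv : (t + 1).val = t.val + 1 := val_add_one htn
        rw [if_neg, if_pos]
        · ring
        · omega
        · intro he; rw [he] at hv; omega
      · rw [if_neg h1, if_neg h2, if_neg, if_neg]
        · omega
        · intro he; rw [he] at h2; omega
  right_inv := by
    intro u
    dsimp only
    by_cases h1 : u = s
    · rw [if_pos h1, if_pos (by rw [Fin.val_last]), h1]
    · by_cases h2 : s.val < u.val
      · rw [if_neg h1, if_pos h2]
        have hu0 : u ≠ 0 := by intro he; rw [he] at h2; simp at h2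
        have hv : (u - 1).val = u.val - 1 := val_sub_one hu0
        have huv := u.isLt
        rw [if_neg (by omega), if_pos (by omega)]
        ring
      · rw [if_neg h1, if_neg h2]
        have hun : u.val ≠ n := by
          intro he
          have hsn : s.val = n := by have := s.isLt; omega
          exact h1 (Fin.ext (by omega))
        rw [if_neg hun, if_neg]
        intro hsu
        have : s.val = u.val := by omega
        exact h1 (Fin.ext this.symm)

lemma sig_apply_of_lt {s t : Fin (n+1)} (h : t.val < s.val) : sig n s t = t := by
  have : t.val ≠ n := by have := s.isLt; omega
  simp only [sig, Equiv.coe_fn_mk, if_neg this, if_neg (by omega : ¬ s.val ≤ t.val)]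

lemma sig_apply_of_ge {s t : Fin (n+1)} (h1 : s.val ≤ t.val) (h2 : t.val < n) :
    sig n s t = t + 1 := by
  simp only [sig, Equiv.coe_fn_mk, if_neg (by omega : ¬ t.val = n), if_pos h1]

lemma sig_apply_last {s t : Fin (n+1)} (h : t.val = n) : sig n s t = s := by
  simp only [sig, Equiv.coe_fn_mk, if_pos h]

lemma sig_symm_apply (s u : Fin (n+1)) :
    (sig n s).symm u = if u = s then Fin.last n else if s.val < u.val then u - 1 else u := rfl

/-- The chamber `D_{l,s}`: cyclic order starting at `l` with `l+s` moved to the end. -/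
def Dp (l s : Fin (n+1)) : Equiv.Perm (Fin (n+1)) := (cyc l) * (sig n s)

lemma Dp_apply (l s t : Fin (n+1)) : Dp l s t = sig n s t + l := by
  rw [Dp, Equiv.Perm.mul_apply]
  unfold cyc
  rw [rotate_pow_apply, Fin.cast_val_eq_self]

lemma Dp_symm_apply (l s a : Fin (n+1)) : (Dp l s).symm a = (sig n s).symm (a - l) := by
  rw [Equiv.symm_apply_eq, Dp_apply, Equiv.apply_symm_apply]
  ring

lemma mem_Dp_iff {l s a b : Fin (n+1)} :
    (a, b) ∈ Cham n (Dp l s) ↔ (sig n s).symm (a - l) < (sig n s).symm (b - l) := by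
  rw [mem_cham_iff, Dp_symm_apply, Dp_symm_apply]

lemma mem_Dp_right {l s a b : Fin (n+1)} (hb : b = l + s) (h : a ≠ b) :
    (a, b) ∈ Cham n (Dp l s) := by
  subst hb
  rw [mem_Dp_iff]
  rw [show l + s - l = s by ring, sig_symm_apply, sig_symm_apply, if_pos rfl]
  have h2 : a - l ≠ s := by intro he; apply h; rw [← he]; ring
  rw [if_neg h2, Fin.lt_def, Fin.val_last]
  split
  · rename_i hgt
    have h0 : a - l ≠ 0 := by intro he; rw [he] at hgt; simp at hgt
    have := val_sub_one h0
    have := (a - l).isLt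
    omega
  · rename_i hle
    have hne : (a - l).val ≠ s.val := fun he => h2 (Fin.ext he)
    have := s.isLt
    omega

lemma mem_Dp_mid {l s a b : Fin (n+1)} (ha : a - l ≠ s) (hb : b - l ≠ s)
    (hab : (a - l).val < (b - l).val) : (a, b) ∈ Cham n (Dp l s) := by
  rw [mem_Dp_iff, sig_symm_apply, sig_symm_apply, if_neg ha, if_neg hb, Fin.lt_def]
  have hane : (a - l).val ≠ s.val := fun he => ha (Fin.ext he)
  have hbne : (b - l).val ≠ s.val := fun he => hb (Fin.ext he)
  split
  · rename_i hga
    have h0 : a - l ≠ 0 := by intro he; rw [he] at hga; simp at hga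
    have hva := val_sub_one h0
    rw [if_pos (by omega)]
    have h0b : b - l ≠ 0 := by intro he; rw [he] at hab; simp at hab
    have hvb := val_sub_one h0b
    omega
  · rename_i hga
    split
    · rename_i hgb
      have h0b : b - l ≠ 0 := by intro he; rw [he] at hgb; simp at hgb
      have hvb := val_sub_one h0b
      omega
    · omega

-- classification of boundary roots of Dp
lemma bcham_Dp {l s : Fin (n+1)} (hs : s ≠ 0) {r : Fin (n+1) × Fin (n+1)}
    (hr : r ∈ bCham n (Dp l s)) :
    (∃ t : Fin (n+1), r = (l + t, l + t + 1) ∧ t + 1 ≠ 0 ∧ t ≠ s) ∨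
    (r = (l + s - 1, l + s + 1) ∧ s.val < n) ∨
    (r = (l - 1, l + s) ∧ s.val < n) := by
  obtain ⟨i, rfl⟩ := hr
  rw [Dp_apply, Dp_apply]
  have hc : (i.castSucc : Fin (n+1)).val = i.val := rfl
  have hsucc : (i.succ : Fin (n+1)).val = i.val + 1 := rfl
  have hin : i.val < n := i.isLt
  have hsv : 0 < s.val := val_pos hs
  have hsn : s.val < n + 1 := s.isLt
  by_cases h1 : s.val ≤ i.val
  · -- castSucc ↦ castSucc + 1
    rw [sig_apply_of_ge (by omega) (by omega)]
    by_cases h2 : i.val + 1 = n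
    · -- final root
      rw [sig_apply_last (by omega)]
      right; right
      constructor
      · have e1 : (i.castSucc : Fin (n+1)) + 1 = -1 := by
          apply Fin.ext
          rw [val_add_one (by omega), vneg1, hc]
          omega
        rw [e1]
        simp only [Prod.mk.injEq]
        constructor <;> ring
      · omega
    · -- ascending root with t = i.succ
      rw [sig_apply_of_ge (by omega) (by omega)]
      left
      refine ⟨i.succ, ?_, ?_, ?_⟩
      · have e1 : (i.castSucc : Fin (n+1)) + 1 = i.succ := by
          apply Fin.ext; rw [val_add_one (by omega), hc, hsucc]
        rw [← e1]
        simp only [Prod.mk.injEq]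
        constructor <;> ring
      · intro he
        have := congrArg Fin.val he
        rw [val_add_one (by omega), hsucc] at this
        simp at this
      · intro he
        have := congrArg Fin.val he
        omega
  · -- castSucc fixed
    rw [sig_apply_of_lt (by omega)]
    by_cases h2 : i.val + 1 = s.val
    · by_cases h3 : i.val + 1 = n
      · -- ascending root with t = castSucc, s = last
        rw [sig_apply_last (by omega)]
        left
        refine ⟨i.castSucc, ?_, ?_, ?_⟩
        · have e1 : (i.castSucc : Fin (n+1)) + 1 = s := by
            apply Fin.ext; rw [val_add_one (by omega), hc]; omega
          rw [← e1]
          simp only [Prod.mk.injEq]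
          constructor <;> ring
        · intro he
          have := congrArg Fin.val he
          rw [val_add_one (by omega), hc] at this
          simp at this
        · intro he
          have := congrArg Fin.val he
          omega
      · -- skip root
        rw [sig_apply_of_ge (by omega) (by omega)]
        right; left
        have e1 : (i.castSucc : Fin (n+1)) = s - 1 := by
          apply Fin.ext; rw [hc, val_sub_one hs]; omega
        have e2 : (i.succ : Fin (n+1)) + 1 = s + 1 := by
          apply Fin.ext
          rw [val_add_one (by omega), val_add_one (by omega), hsucc]
          omega
        constructor
        · rw [e1, e2]
          simp only [Prod.mk.injEq]
          constructor <;> ring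
        · omega
    · -- ascending root with t = castSucc, i.val + 1 < s.val
      rw [sig_apply_of_lt (by omega)]
      left
      refine ⟨i.castSucc, ?_, ?_, ?_⟩
      · have e1 : (i.castSucc : Fin (n+1)) + 1 = i.succ := by
          apply Fin.ext; rw [val_add_one (by omega), hc, hsucc]
        rw [← e1]
        simp only [Prod.mk.injEq]
        constructor <;> ring
      · intro he
        have := congrArg Fin.val he
        rw [val_add_one (by omega), hc] at this
        simp at this
      · intro he
        have := congrArg Fin.val he
        omega



variable {n : ℕ}

lemma mem_cyc_self1 {a b : Fin (n+1)} (h : a ≠ b) : (a, b) ∈ Cham n (cyc a) := by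
  rw [mem_cyc_iff, show a - a = 0 by ring]
  simpa using val_pos (sub_ne_zero_of_ne (Ne.symm h))

lemma mem_cyc_self2 {a b : Fin (n+1)} (h : a ≠ b) : (a, b) ∈ Cham n (cyc (b+1)) := by
  rw [mem_cyc_iff, show b - (b+1) = -1 by ring, vneg1]
  apply val_lt_n
  intro he
  exact h (by linear_combination he)

lemma cyc_mem_Ck (k : ℕ) (l : Fin (n+1)) : Cham n (cyc l) ∈ Ck n k := by
  induction k generalizing l with
  | zero => exact ⟨l.val, Nat.lt_succ_iff.mp l.isLt, rfl⟩
  | succ k ih =>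
      refine ⟨cyc l, rfl, ?_, ?_⟩
      · intro α hα β hβ
        exact ⟨_, ih l, bcham_subset hα, bcham_subset hβ⟩
      · intro i j i' j' h1 h2 h3
        exact ⟨⟨_, ih i, mem_cyc_self1 (ne_of_mem_cham h1), mem_cyc_self1 (ne_of_mem_cham h2)⟩,
               ⟨_, ih (j+1), mem_cyc_self2 (ne_of_mem_cham h1), mem_cyc_self2 (ne_of_mem_cham h3)⟩⟩

lemma mem_Ck_succ (k : ℕ) (γ : Equiv.Perm (Fin (n+1)))
    (hb : ∀ α ∈ bCham n γ, ∀ β ∈ bCham n γ, pairLt (Ck n k) α β) :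
    Cham n γ ∈ Ck n (k+1) :=
  ⟨γ, rfl, hb, fun _ _ _ _ h1 h2 h3 =>
    ⟨⟨_, cyc_mem_Ck k _, mem_cyc_self1 (ne_of_mem_cham h1), mem_cyc_self1 (ne_of_mem_cham h2)⟩,
     ⟨_, cyc_mem_Ck k _, mem_cyc_self2 (ne_of_mem_cham h1), mem_cyc_self2 (ne_of_mem_cham h3)⟩⟩⟩

-- memberships of D-boundary roots in cyclic chambers
lemma asc_mem_cyc_l {l t : Fin (n+1)} (h : t + 1 ≠ 0) : (l + t, l + t + 1) ∈ Cham n (cyc l) := by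
  rw [mem_cyc_iff, show l + t - l = t by ring, show l + t + 1 - l = t + 1 by ring]
  have htn : t.val < n := val_lt_n (fun he => h (by rw [he]; ring))
  rw [val_add_one htn]
  omega

lemma skip_mem_cyc_l {l s : Fin (n+1)} (h0 : s ≠ 0) (hsn : s.val < n) :
    (l + s - 1, l + s + 1) ∈ Cham n (cyc l) := by
  rw [mem_cyc_iff, show l + s - 1 - l = s - 1 by ring, show l + s + 1 - l = s + 1 by ring,
      val_sub_one h0, val_add_one hsn]
  have := val_pos h0
  omega

lemma asc_mem_cyc_x1 {l s t : Fin (n+1)} (ht : t ≠ s) :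
    (l + t, l + t + 1) ∈ Cham n (cyc (l + s + 1)) := by
  rw [mem_cyc_iff, show l + t - (l + s + 1) = t - s - 1 by ring,
      show l + t + 1 - (l + s + 1) = t - s by ring]
  have hne : t - s ≠ 0 := sub_ne_zero_of_ne ht
  rw [val_sub_one hne]
  have := val_pos hne
  omega

lemma fin_mem_cyc_x1 {l s : Fin (n+1)} (hsn : s.val < n) :
    (l - 1, l + s) ∈ Cham n (cyc (l + s + 1)) := by
  rw [mem_cyc_iff, show l - 1 - (l + s + 1) = -s - 1 - 1 by ring,
      show l + s - (l + s + 1) = -1 by ring, vneg1]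
  apply val_lt_n
  intro he
  have hs : s = -1 := by linear_combination -he
  rw [hs, vneg1] at hsn
  omega

lemma neg_one_ne_zero' (hn : 1 ≤ n) : (-1 : Fin (n+1)) ≠ 0 := by
  intro he
  have := congrArg Fin.val he
  rw [vneg1, Fin.val_zero] at this
  omega

lemma vneg2 (hn : 1 ≤ n) : (-1 - 1 : Fin (n+1)).val = n - 1 := by
  rw [val_sub_one (neg_one_ne_zero' hn), vneg1]

lemma neg_two_ne_zero' (hn : 2 ≤ n) : (-1 - 1 : Fin (n+1)) ≠ 0 := by
  intro he
  have := congrArg Fin.val he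
  rw [vneg2 (by omega), Fin.val_zero] at this
  omega

lemma vneg3 (hn : 2 ≤ n) : (-1 - 1 - 1 : Fin (n+1)).val = n - 2 := by
  rw [val_sub_one (neg_two_ne_zero' hn), vneg2 (by omega)]
  omega

lemma neg_three_ne_zero' (hn : 3 ≤ n) : (-1 - 1 - 1 : Fin (n+1)) ≠ 0 := by
  intro he
  have := congrArg Fin.val he
  rw [vneg3 (by omega), Fin.val_zero] at this
  omega

lemma vneg4 (hn : 3 ≤ n) : (-1 - 1 - 1 - 1 : Fin (n+1)).val = n - 3 := by
  rw [val_sub_one (neg_three_ne_zero' hn), vneg3 (by omega)]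
  omega

lemma skip_mem_cyc_x2 (hn : 3 ≤ n) {l s : Fin (n+1)} :
    (l + s - 1, l + s + 1) ∈ Cham n (cyc (l + s + 1 + 1)) := by
  rw [mem_cyc_iff, show l + s - 1 - (l + s + 1 + 1) = -1 - 1 - 1 by ring,
      show l + s + 1 - (l + s + 1 + 1) = -1 by ring, vneg3 (by omega), vneg1]
  omega

lemma fin_mem_cyc_x2 (hn : 3 ≤ n) {l s : Fin (n+1)} (hs1 : s ≠ -1) (hs2 : s ≠ -1 - 1) :
    (l - 1, l + s) ∈ Cham n (cyc (l + s + 1 + 1)) := by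
  rw [mem_cyc_iff, show l - 1 - (l + s + 1 + 1) = -s - 1 - 1 - 1 by ring,
      show l + s - (l + s + 1 + 1) = -1 - 1 by ring, vneg2 (by omega)]
  have hy1 : (-s - 1 - 1 - 1 : Fin (n+1)) ≠ -1 := fun he => hs2 (by linear_combination -he)
  have hy2 : (-s - 1 - 1 - 1 : Fin (n+1)) ≠ -1 - 1 := fun he => hs1 (by linear_combination -he)
  have hv1 := val_lt_n hy1
  have hv2 : (-s - 1 - 1 - 1 : Fin (n+1)).val ≠ n - 1 := by
    intro he
    exact hy2 (Fin.ext (by rw [he, vneg2 (by omega)]))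
  omega

lemma Dp_mem_C1 (hn : 3 ≤ n) {l s : Fin (n+1)} (h0 : s ≠ 0) (h1 : s ≠ -1) (h2 : s ≠ -1 - 1) :
    Cham n (Dp l s) ∈ Ck n 1 := by
  apply mem_Ck_succ
  intro α hα β hβ
  rcases bcham_Dp h0 hα with ⟨t, rfl, ht1, ht2⟩ | ⟨rfl, hsn⟩ | ⟨rfl, hsn⟩ <;>
    rcases bcham_Dp h0 hβ with ⟨t', rfl, ht1', ht2'⟩ | ⟨rfl, hsn'⟩ | ⟨rfl, hsn'⟩
  · exact ⟨_, cyc_mem_Ck 0 l, asc_mem_cyc_l ht1, asc_mem_cyc_l ht1'⟩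
  · exact ⟨_, cyc_mem_Ck 0 l, asc_mem_cyc_l ht1, skip_mem_cyc_l h0 hsn'⟩
  · exact ⟨_, cyc_mem_Ck 0 (l + s + 1), asc_mem_cyc_x1 ht2, fin_mem_cyc_x1 hsn'⟩
  · exact ⟨_, cyc_mem_Ck 0 l, skip_mem_cyc_l h0 hsn, asc_mem_cyc_l ht1'⟩
  · exact ⟨_, cyc_mem_Ck 0 l, skip_mem_cyc_l h0 hsn, skip_mem_cyc_l h0 hsn'⟩
  · exact ⟨_, cyc_mem_Ck 0 (l + s + 1 + 1), skip_mem_cyc_x2 hn, fin_mem_cyc_x2 hn h1 h2⟩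
  · exact ⟨_, cyc_mem_Ck 0 (l + s + 1), fin_mem_cyc_x1 hsn, asc_mem_cyc_x1 ht2'⟩
  · exact ⟨_, cyc_mem_Ck 0 (l + s + 1 + 1), fin_mem_cyc_x2 hn h1 h2, skip_mem_cyc_x2 hn⟩
  · exact ⟨_, cyc_mem_Ck 0 (l + s + 1), fin_mem_cyc_x1 hsn, fin_mem_cyc_x1 hsn⟩

lemma Dp_mem_C2 (hn : 3 ≤ n) {l s : Fin (n+1)} (h0 : s ≠ 0) :
    Cham n (Dp l s) ∈ Ck n 2 := by
  apply mem_Ck_succ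
  intro α hα β hβ
  have skipfin : ∀ (hsn : s.val < n),
      pairLt (Ck n 1) (l + s - 1, l + s + 1) (l - 1, l + s) ∧
      pairLt (Ck n 1) (l - 1, l + s) (l + s - 1, l + s + 1) := by
    intro hsn
    have hs1 : s ≠ -1 := by
      intro he; rw [he, vneg1] at hsn; omega
    by_cases hs2 : s = -1 - 1
    · -- use the chamber Dp (l+1) (-1-1-1)
      have hC := Dp_mem_C1 hn (l := l + 1) (s := -1 - 1 - 1)
        (neg_three_ne_zero' hn)
        (by intro he; have := congrArg Fin.val he; rw [vneg3 (by omega), vneg1] at this; omega)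
        (by intro he; have := congrArg Fin.val he; rw [vneg3 (by omega), vneg2 (by omega)] at this; omega)
      have hmem1 : (l + s - 1, l + s + 1) ∈ Cham n (Dp (l + 1) (-1 - 1 - 1)) := by
        apply mem_Dp_mid
        · rw [show l + s - 1 - (l + 1) = s - 1 - 1 by ring, hs2]
          intro he
          have hv := congrArg Fin.val he
          rw [vneg4 hn, vneg3 (by omega)] at hv
          omega
        · rw [show l + s + 1 - (l + 1) = s by ring, hs2]
          intro he
          have hv := congrArg Fin.val he
          rw [vneg2 (by omega), vneg3 (by omega)] at hv
          omega
        · rw [show l + s - 1 - (l + 1) = s - 1 - 1 by ring,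
              show l + s + 1 - (l + 1) = s by ring, hs2, vneg2 (by omega),
              show (-1 - 1 : Fin (n+1)) - 1 - 1 = -1 - 1 - 1 - 1 by ring, vneg4 hn]
          omega
      have hmem2 : (l - 1, l + s) ∈ Cham n (Dp (l + 1) (-1 - 1 - 1)) := by
        apply mem_Dp_right
        · rw [hs2]; ring
        · intro he
          have h2 : (-1 : Fin (n+1)) = s := by linear_combination he
          rw [hs2] at h2
          have hv := congrArg Fin.val h2
          rw [vneg1, vneg2 (by omega)] at hv
          omega
      exact ⟨⟨_, hC, hmem1, hmem2⟩, ⟨_, hC, hmem2, hmem1⟩⟩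
    · exact ⟨⟨_, cyc_mem_Ck 1 (l + s + 1 + 1), skip_mem_cyc_x2 hn, fin_mem_cyc_x2 hn hs1 hs2⟩,
             ⟨_, cyc_mem_Ck 1 (l + s + 1 + 1), fin_mem_cyc_x2 hn hs1 hs2, skip_mem_cyc_x2 hn⟩⟩
  rcases bcham_Dp h0 hα with ⟨t, rfl, ht1, ht2⟩ | ⟨rfl, hsn⟩ | ⟨rfl, hsn⟩ <;>
    rcases bcham_Dp h0 hβ with ⟨t', rfl, ht1', ht2'⟩ | ⟨rfl, hsn'⟩ | ⟨rfl, hsn'⟩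
  · exact ⟨_, cyc_mem_Ck 1 l, asc_mem_cyc_l ht1, asc_mem_cyc_l ht1'⟩
  · exact ⟨_, cyc_mem_Ck 1 l, asc_mem_cyc_l ht1, skip_mem_cyc_l h0 hsn'⟩
  · exact ⟨_, cyc_mem_Ck 1 (l + s + 1), asc_mem_cyc_x1 ht2, fin_mem_cyc_x1 hsn'⟩
  · exact ⟨_, cyc_mem_Ck 1 l, skip_mem_cyc_l h0 hsn, asc_mem_cyc_l ht1'⟩
  · exact ⟨_, cyc_mem_Ck 1 l, skip_mem_cyc_l h0 hsn, skip_mem_cyc_l h0 hsn'⟩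
  · exact (skipfin hsn').1
  · exact ⟨_, cyc_mem_Ck 1 (l + s + 1), fin_mem_cyc_x1 hsn, asc_mem_cyc_x1 ht2'⟩
  · exact (skipfin hsn).2
  · exact ⟨_, cyc_mem_Ck 1 (l + s + 1), fin_mem_cyc_x1 hsn, fin_mem_cyc_x1 hsn⟩

end St13



/-- For `n ≥ 3`, every pair of non-opposite roots of the `A_n` root
system is contained in a common Weyl chamber belonging to `𝒞_2`. -/
theorem pair_of_roots_lt_C2 (n : ℕ) (hn : 3 ≤ n) (α β : Fin (n + 1) × Fin (n + 1))
    (hα : α.1 ≠ α.2) (hβ : β.1 ≠ β.2) (hop : β ≠ (α.2, α.1)) :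
    pairLt (Ck n 2) α β := by
  obtain ⟨a, b⟩ := α
  obtain ⟨c, d⟩ := β
  replace hα : a ≠ b := hα
  replace hβ : c ≠ d := hβ
  by_cases hbd : b = d
  · subst hbd
    exact ⟨_, St13.cyc_mem_Ck 2 (b + 1), St13.mem_cyc_self2 hα, St13.mem_cyc_self2 hβ⟩
  · by_cases had : a = d
    · subst had
      have hcb : c ≠ b := by
        intro he
        exact hop (by rw [he])
      have hs0 : b - c ≠ 0 := sub_ne_zero_of_ne (Ne.symm hcb)
      refine ⟨_, St13.Dp_mem_C2 hn (l := c) hs0, ?_, ?_⟩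
      · exact St13.mem_Dp_right (by ring) hα
      · apply St13.mem_Dp_mid
        · rw [show c - c = 0 by ring]
          exact Ne.symm hs0
        · intro he
          exact hα (by linear_combination he)
        · rw [show c - c = 0 by ring, Fin.val_zero]
          exact St13.val_pos (sub_ne_zero_of_ne (Ne.symm hβ))
    · have hs0 : d - a ≠ 0 := sub_ne_zero_of_ne (fun he => had he.symm)
      refine ⟨_, St13.Dp_mem_C2 hn (l := a) hs0, ?_, ?_⟩
      · apply St13.mem_Dp_mid
        · rw [show a - a = 0 by ring]
          exact Ne.symm hs0
        · intro he
          exact hbd (by linear_combination he)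
        · rw [show a - a = 0 by ring, Fin.val_zero]
          exact St13.val_pos (sub_ne_zero_of_ne (Ne.symm hα))
      · exact St13.mem_Dp_right (by ring) hβ
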